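/- arXiv:1501.01804 — 2 statements merged into one kernel-verified Lean document; each statement's English description precedes it below -/
import Mathlib

section
/- Let χ be a non-principal Dirichlet character mod q, let φ be a real number, T a positive real number, and 0 ≤ λ ≤ 1/2. Then √(2πT) · ∫_{−∞}^{∞} (S(e^y, χ_φ)/e^y) · exp(λy − (T/2)y²) dy = ∫_{−∞}^{∞} ( L(1 − λ + iφ + iξ, χ)/(1 − λ + iξ) ) · exp(−ξ²/(2T)) dξ. -/
open Complex

/-- The twisted character sum `S(x, χ_φ) = ∑_{n ≤ x} χ(n) n^{-iφ}`. -/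
noncomputable def Sphi {q : ℕ} (χ : DirichletCharacter ℂ q) (φ : ℝ) (x : ℝ) : ℂ :=
  ∑ n ∈ Finset.Icc 1 ⌊x⌋₊, χ n * (n : ℂ) ^ (-(I * (φ : ℂ)))

section GSaux

open MeasureTheory Set Filter Asymptotics Topology

set_option maxHeartbeats 1000000
set_option linter.unusedSectionVars false
set_option linter.unusedVariables false

noncomputable def Fgs {q : ℕ} (χ : DirichletCharacter ℂ q) (φ : ℝ) (s : ℂ) : ℂ :=
  ∫ y : ℝ, Sphi χ φ (Real.exp y) * Complex.exp (-(s*y))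

section Part1

variable {q : ℕ} [NeZero q] (χ : DirichletCharacter ℂ q)

lemma q_ne_one (hχ : χ ≠ 1) : q ≠ 1 := by
  rintro rfl
  exact hχ (MulChar.ext fun a => by simp [Subsingleton.elim a 1])

lemma chi_zero (hχ : χ ≠ 1) : χ (0 : ZMod q) = 0 := by
  apply χ.map_nonunit
  rw [isUnit_zero_iff]
  intro h
  have : Subsingleton (ZMod q) := subsingleton_of_zero_eq_one h
  exact q_ne_one χ hχ (ZMod.subsingleton_iff.mp this)

lemma sum_chi_period (hχ : χ ≠ 1) (m : ℕ) :
    ∑ i ∈ Finset.range q, χ ((m + i : ℕ) : ZMod q) = 0 := by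
  have h0 : ∑ i ∈ Finset.range q, χ ((i : ℕ) : ZMod q) = 0 := by
    rw [Finset.sum_nbij' (i := fun (n : ℕ) => (n : ZMod q))
      (j := fun (a : ZMod q) => a.val) (t := Finset.univ) (g := fun a => χ a)]
    · exact χ.sum_eq_zero_of_ne_one hχ
    · intro a _; exact Finset.mem_univ _
    · intro a _; exact Finset.mem_range.2 (ZMod.val_lt a)
    · intro a ha; exact ZMod.val_cast_of_lt (Finset.mem_range.1 ha)
    · intro a _; exact ZMod.natCast_val a |>.trans (by simp)
    · intro a _; rfl
  induction m with
  | zero => simpa using h0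
  | succ m ih =>
    have key : ∀ i : ℕ, ((m + 1 + i : ℕ) : ZMod q) = ((m + (i + 1) : ℕ) : ZMod q) := by
      intro i; congr 1; omega
    have h1 := Finset.sum_range_succ' (fun i => χ ((m + i : ℕ) : ZMod q)) q
    have h2 := Finset.sum_range_succ (fun i => χ ((m + i : ℕ) : ZMod q)) q
    have hper : χ ((m + q : ℕ) : ZMod q) = χ ((m + 0 : ℕ) : ZMod q) := by
      congr 1; push_cast; simp [ZMod.natCast_self]
    calc ∑ i ∈ Finset.range q, χ ((m + 1 + i : ℕ) : ZMod q)
        = ∑ i ∈ Finset.range q, χ ((m + (i + 1) : ℕ) : ZMod q) :=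
          Finset.sum_congr rfl fun i _ => by rw [key]
      _ = 0 := by
          rw [h2, hper] at h1
          linear_combination ih - h1
  
lemma sum_chi_bound (hχ : χ ≠ 1) (N : ℕ) :
    ‖∑ n ∈ Finset.range N, χ ((n : ℕ) : ZMod q)‖ ≤ q := by
  induction N using Nat.strong_induction_on with
  | _ N ih =>
    rcases le_or_gt N q with h | h
    · calc ‖∑ n ∈ Finset.range N, χ ((n : ℕ) : ZMod q)‖
          ≤ ∑ n ∈ Finset.range N, ‖χ ((n : ℕ) : ZMod q)‖ := norm_sum_le _ _
        _ ≤ ∑ _n ∈ Finset.range N, 1 := Finset.sum_le_sum fun n _ => χ.norm_le_one _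
        _ = N := by simp
        _ ≤ q := by exact_mod_cast h
    · have hq0 : 0 < q := Nat.pos_of_ne_zero (NeZero.ne q)
      have hq : q ≤ N := h.le
      have hsplit : ∑ n ∈ Finset.Ico 0 (N - q), χ ((n:ℕ) : ZMod q)
          + ∑ n ∈ Finset.Ico (N - q) N, χ ((n:ℕ) : ZMod q)
          = ∑ n ∈ Finset.Ico 0 N, χ ((n:ℕ) : ZMod q) :=
        Finset.sum_Ico_consecutive _ (Nat.zero_le (N - q)) (by omega)
      have hIco : ∑ n ∈ Finset.Ico (N - q) N, χ ((n : ℕ) : ZMod q) = 0 := by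
        rw [Finset.sum_Ico_eq_sum_range]
        have hNq : N - (N - q) = q := by omega
        rw [hNq]
        exact sum_chi_period χ hχ (N - q)
      rw [Finset.range_eq_Ico, ← hsplit, hIco, add_zero, ← Finset.range_eq_Ico]
      exact ih (N - q) (by omega)

end Part1

section Part2

noncomputable def fphi (φ : ℝ) (n : ℕ) : ℂ := (n : ℂ) ^ (-(I * (φ:ℂ)))

lemma norm_fphi_le (φ : ℝ) (n : ℕ) : ‖fphi φ n‖ ≤ 1 := by
  rcases Nat.eq_zero_or_pos n with rfl | hn
  · simp only [fphi, Nat.cast_zero]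
    rcases eq_or_ne (-(I * (φ:ℂ))) 0 with h | h
    · rw [h, Complex.cpow_zero]; simp
    · rw [Complex.zero_cpow h]; simp
  · have : ‖fphi φ n‖ = 1 := by
      rw [fphi, show ((n:ℕ):ℂ) = (((n:ℝ)):ℂ) by push_cast; rfl,
        Complex.norm_cpow_eq_rpow_re_of_pos (by exact_mod_cast hn)]
      simp
    rw [this]

lemma norm_fphi_one {φ : ℝ} {n : ℕ} (hn : 1 ≤ n) : ‖fphi φ n‖ = 1 := by
  rw [fphi, show ((n:ℕ):ℂ) = (((n:ℝ)):ℂ) by push_cast; rfl,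
    Complex.norm_cpow_eq_rpow_re_of_pos (by exact_mod_cast hn)]
  simp

lemma fphi_eq_exp {φ : ℝ} {n : ℕ} (hn : 1 ≤ n) :
    fphi φ n = Complex.exp (((-(φ * Real.log n)) : ℝ) * I) := by
  have hn0 : ((n:ℕ):ℂ) ≠ 0 := by exact_mod_cast Nat.cast_ne_zero.mpr (by omega)
  rw [fphi, Complex.cpow_def_of_ne_zero hn0]
  congr 1
  rw [show ((n:ℕ):ℂ) = (((n:ℝ)):ℂ) by push_cast; rfl,
    ← Complex.ofReal_log (by positivity : (0:ℝ) ≤ (n:ℝ))]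
  push_cast
  ring

lemma norm_exp_I_sub_exp_I (a b : ℝ) :
    ‖Complex.exp ((a:ℝ) * I) - Complex.exp ((b:ℝ) * I)‖ ≤ 2 * |a - b| := by
  have key : Complex.exp ((a:ℝ) * I) - Complex.exp ((b:ℝ) * I)
      = Complex.exp ((b:ℝ) * I) * (Complex.exp (((a - b : ℝ)) * I) - 1) := by
    rw [mul_sub, ← Complex.exp_add, mul_one]
    congr 2
    push_cast; ring
  rw [key, norm_mul, Complex.norm_exp_ofReal_mul_I, one_mul]
  have habs : ‖((a - b : ℝ)) * I‖ = |a - b| := by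
    rw [norm_mul, Complex.norm_I, Complex.norm_real, Real.norm_eq_abs, mul_one]
  rcases le_or_gt (|a - b|) 1 with h | h
  · have := Complex.norm_exp_sub_one_le (x := ((a - b : ℝ)) * I) (by rw [habs]; exact h)
    rw [habs] at this
    linarith
  · have h1 : ‖Complex.exp (((a - b : ℝ)) * I) - 1‖ ≤ 2 := by
      refine (norm_sub_le _ _).trans ?_
      rw [Complex.norm_exp_ofReal_mul_I, norm_one]; norm_num
    nlinarith [abs_nonneg (a - b)]

lemma fphi_diff {φ : ℝ} {i : ℕ} (hi : 1 ≤ i) :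
    ‖fphi φ (i+1) - fphi φ i‖ ≤ 2 * |φ| * (Real.log ((i+1 : ℕ)) - Real.log (i : ℕ)) := by
  rw [fphi_eq_exp (by omega), fphi_eq_exp hi]
  have := norm_exp_I_sub_exp_I (-(φ * Real.log (i+1:ℕ))) (-(φ * Real.log i))
  refine this.trans ?_
  have hlog : Real.log i ≤ Real.log (i+1:ℕ) := by
    apply Real.log_le_log (by exact_mod_cast hi) (by push_cast; linarith)
  have : |(-(φ * Real.log (i+1:ℕ))) - (-(φ * Real.log i))| 
      = |φ| * (Real.log (i+1:ℕ) - Real.log i) := by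
    rw [show (-(φ * Real.log (i+1:ℕ))) - (-(φ * Real.log i)) = -(φ * (Real.log (i+1:ℕ) - Real.log i)) by ring, abs_neg, abs_mul, _root_.abs_of_nonneg (by linarith : (0:ℝ) ≤ Real.log (i+1:ℕ) - Real.log i)]
  rw [this]
  push_cast
  ring_nf
  exact le_rfl

lemma Sphi_eq_zero' {q : ℕ} (χ : DirichletCharacter ℂ q) (φ : ℝ) {x : ℝ} (hx : x < 1) :
    Sphi χ φ x = 0 := by
  have : ⌊x⌋₊ = 0 := Nat.floor_eq_zero.mpr hx
  simp [Sphi, this]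


lemma Sphi_bound {q : ℕ} [NeZero q] (χ : DirichletCharacter ℂ q) (hχ : χ ≠ 1) (φ : ℝ)
    {x : ℝ} (hx : 1 ≤ x) :
    ‖Sphi χ φ x‖ ≤ (3 + 2*|φ|) * q * (1 + Real.log x) := by
  set N := ⌊x⌋₊ with hNdef
  have hx0 : (0:ℝ) ≤ x := by linarith
  have hN1 : 1 ≤ N := Nat.le_floor (by exact_mod_cast hx)
  have hNx : (N : ℝ) ≤ x := Nat.floor_le hx0
  have hlogN : Real.log N ≤ Real.log x := Real.log_le_log (by exact_mod_cast hN1) hNx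
  have hlogN0 : 0 ≤ Real.log N := Real.log_nonneg (by exact_mod_cast hN1)
  have hlogx0 : 0 ≤ Real.log x := Real.log_nonneg hx
  have hq0 : (0:ℝ) ≤ q := Nat.cast_nonneg q
  have hset : Finset.range (N+1) = insert 0 (Finset.Icc 1 N) := by
    ext n
    simp only [Finset.mem_range, Finset.mem_insert, Finset.mem_Icc, Nat.lt_succ_iff]
    omega
  have hS : Sphi χ φ x = ∑ n ∈ Finset.range (N+1), fphi φ n • (χ (n : ZMod q) : ℂ) := by
    rw [hset, Finset.sum_insert (by simp)]
    have h0 : fphi φ 0 • (χ ((0:ℕ) : ZMod q) : ℂ) = 0 := by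
      rw [show ((0:ℕ) : ZMod q) = 0 by simp, chi_zero χ hχ, smul_zero]
    rw [h0, zero_add, Sphi]
    exact Finset.sum_congr rfl fun n _ => by simp only [fphi, smul_eq_mul]; ring
  have hbp := Finset.sum_range_by_parts (fun n => fphi φ n) (fun n => (χ (n : ZMod q) : ℂ)) (N+1)
  simp only [Nat.add_sub_cancel] at hbp
  rw [hS, hbp]
  have hGb : ∀ n : ℕ, ‖∑ i ∈ Finset.range n, (χ (i : ZMod q) : ℂ)‖ ≤ q :=
    fun n => sum_chi_bound χ hχ n
  set D : ℕ → ℝ := fun i => 2*|φ| * (Real.log ((i+1:ℕ)) - Real.log (i:ℕ)) + (if i = 0 then 2 else 0)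
    with hD
  have hDle : ∀ i ∈ Finset.range N,
      ‖(fphi φ (i+1) - fphi φ i) • (∑ j ∈ Finset.range (i+1), (χ (j : ZMod q) : ℂ))‖
        ≤ D i * q := by
    intro i _
    rw [norm_smul]
    have hnorm : ‖fphi φ (i+1) - fphi φ i‖ ≤ D i := by
      rcases Nat.eq_zero_or_pos i with rfl | hi
      · simp only [hD, Nat.cast_one, Nat.cast_zero, Real.log_one, Real.log_zero, sub_zero,
          if_pos rfl, mul_zero, zero_add]
        calc ‖fphi φ 1 - fphi φ 0‖ ≤ ‖fphi φ 1‖ + ‖fphi φ 0‖ := norm_sub_le _ _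
          _ ≤ 1 + 1 := add_le_add (norm_fphi_le φ 1) (norm_fphi_le φ 0)
          _ = 2 := by norm_num
      · have h := fphi_diff (φ := φ) hi
        simp only [hD, if_neg (by omega : ¬ i = 0), add_zero]
        exact h
    exact mul_le_mul hnorm (hGb (i+1)) (norm_nonneg _) (le_trans (norm_nonneg _) hnorm)
  have hsumD : ∑ i ∈ Finset.range N, D i = 2*|φ| * Real.log N + 2 := by
    simp only [hD]
    rw [Finset.sum_add_distrib, ← Finset.mul_sum]
    have htel : ∑ i ∈ Finset.range N, (Real.log ((i+1:ℕ)) - Real.log (i:ℕ))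
        = Real.log (N:ℕ) - Real.log ((0:ℕ):ℝ) := Finset.sum_range_sub (fun n => Real.log (n:ℕ)) N
    have h0mem : (0:ℕ) ∈ Finset.range N := Finset.mem_range.mpr (by omega)
    have hite : ∑ i ∈ Finset.range N, (if i = 0 then (2:ℝ) else 0) = 2 := by
      rw [Finset.sum_ite_eq' (Finset.range N) 0 (fun _ => (2:ℝ)), if_pos h0mem]
    rw [htel, hite]
    simp
  calc ‖fphi φ N • (∑ i ∈ Finset.range (N+1), (χ (i : ZMod q) : ℂ))
        - ∑ i ∈ Finset.range N, (fphi φ (i+1) - fphi φ i) •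
            (∑ j ∈ Finset.range (i+1), (χ (j : ZMod q) : ℂ))‖
      ≤ ‖fphi φ N • (∑ i ∈ Finset.range (N+1), (χ (i : ZMod q) : ℂ))‖
        + ‖∑ i ∈ Finset.range N, (fphi φ (i+1) - fphi φ i) •
            (∑ j ∈ Finset.range (i+1), (χ (j : ZMod q) : ℂ))‖ := norm_sub_le _ _
    _ ≤ 1 * q + ∑ i ∈ Finset.range N, D i * q := by
        apply add_le_add
        · rw [norm_smul, norm_fphi_one hN1]
          simpa using hGb (N+1)
        · exact (norm_sum_le _ _).trans (Finset.sum_le_sum hDle)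
    _ = q + (2*|φ| * Real.log N + 2) * q := by
        rw [← Finset.sum_mul, hsumD, one_mul]
    _ ≤ (3 + 2*|φ|) * q * (1 + Real.log x) := by
        nlinarith [abs_nonneg φ, mul_le_mul_of_nonneg_left hlogN (by positivity : (0:ℝ) ≤ 2 * |φ| * (q:ℝ))]

lemma norm_fphi_le' (φ : ℝ) (n : ℕ) : ‖(n : ℂ) ^ (-(I * (φ:ℂ)))‖ ≤ 1 :=
  norm_fphi_le φ n

end Part2

section Part3

variable {q : ℕ} [NeZero q] (χ : DirichletCharacter ℂ q) (φ : ℝ)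

lemma Sphi_measurable : Measurable (Sphi χ φ) :=
  (measurable_from_nat
    (f := fun N => ∑ n ∈ Finset.Icc 1 N, χ n * (n:ℂ)^(-(I*(φ:ℂ))))).comp Nat.measurable_floor

lemma Sphi_crude (x : ℝ) : ‖Sphi χ φ x‖ ≤ ⌊x⌋₊ := by
  calc ‖Sphi χ φ x‖ ≤ ∑ n ∈ Finset.Icc 1 ⌊x⌋₊, ‖χ n * (n:ℂ)^(-(I*(φ:ℂ)))‖ := norm_sum_le _ _
    _ ≤ ∑ _n ∈ Finset.Icc 1 ⌊x⌋₊, 1 := by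
        refine Finset.sum_le_sum fun n _ => ?_
        rw [norm_mul]
        exact mul_le_one₀ (χ.norm_le_one _) (norm_nonneg _) (norm_fphi_le' φ n)
    _ = (Finset.Icc 1 ⌊x⌋₊).card := by simp
    _ ≤ ⌊x⌋₊ := by rw [Nat.card_Icc]; simp

lemma Sphi_locInt : LocallyIntegrableOn (Sphi χ φ) (Ioi 0) volume := by
  rw [locallyIntegrableOn_iff isOpen_Ioi.isLocallyClosed]
  intro k hk hkc
  obtain ⟨b, hb⟩ := hkc.bddAbove
  refine Measure.integrableOn_of_bounded (M := (⌊b⌋₊ : ℝ)) hkc.measure_lt_top.ne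
    ((Sphi_measurable χ φ).aestronglyMeasurable) ?_
  refine (ae_restrict_iff' hkc.measurableSet).mpr (.of_forall fun x hx => ?_)
  exact (Sphi_crude χ φ x).trans (by exact_mod_cast Nat.floor_le_floor (hb hx))

lemma Sphi_isBigO_atTop (hχ : χ ≠ 1) :
    (Sphi χ φ) =O[atTop] fun x : ℝ => x ^ ((1:ℝ)/4) := by
  have h1 : (fun _ : ℝ => (1:ℝ)) =O[atTop] fun x => x ^ ((1:ℝ)/4) := by
    refine IsBigO.of_bound 1 ?_
    filter_upwards [eventually_ge_atTop (1:ℝ)] with x hx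
    have : (1:ℝ) ≤ x ^ ((1:ℝ)/4) := by
      calc (1:ℝ) = 1 ^ ((1:ℝ)/4) := (Real.one_rpow _).symm
        _ ≤ x ^ ((1:ℝ)/4) := Real.rpow_le_rpow zero_le_one hx (by norm_num)
    rw [norm_one, one_mul, Real.norm_eq_abs]
    exact this.trans (le_abs_self _)
  have hlog : Real.log =O[atTop] fun x => x ^ ((1:ℝ)/4) :=
    (isLittleO_log_rpow_atTop (by norm_num)).isBigO
  have h2 : (fun x => 1 + Real.log x) =O[atTop] fun x => x ^ ((1:ℝ)/4) := h1.add hlog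
  have h3 : (Sphi χ φ) =O[atTop] fun x => 1 + Real.log x := by
    refine IsBigO.of_bound ((3 + 2*|φ|) * q) ?_
    filter_upwards [eventually_ge_atTop (1:ℝ)] with x hx
    have := Sphi_bound χ hχ φ hx
    have hpos : (0:ℝ) ≤ 1 + Real.log x := by
      have := Real.log_nonneg hx; linarith
    rwa [Real.norm_eq_abs, _root_.abs_of_nonneg hpos]
  exact h3.trans h2

lemma Sphi_isBigO_zero (b : ℝ) : (Sphi χ φ) =O[nhdsWithin (0:ℝ) (Set.Ioi 0)] fun x => x ^ (-b) := by
  have hev : Sphi χ φ =ᶠ[𝓝[>] (0:ℝ)] (fun _ => (0:ℂ)) := by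
    have h1 : Iio (1:ℝ) ∈ 𝓝[>] (0:ℝ) :=
      mem_nhdsWithin_of_mem_nhds (Iio_mem_nhds one_pos)
    filter_upwards [h1] with x hx
    exact Sphi_eq_zero' χ φ hx
  exact hev.trans_isBigO (isBigO_zero _ _)


lemma cov_exp (g : ℝ → ℂ) :
    ∫ x in Ioi (0:ℝ), g x = ∫ y : ℝ, Real.exp y • g (Real.exp y) := by
  have h := integral_image_eq_integral_abs_deriv_smul MeasurableSet.univ
    (fun x _ => (Real.hasDerivAt_exp x).hasDerivWithinAt) Real.exp_injective.injOn g
  rw [Set.image_univ, Real.range_exp] at h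
  rw [h, setIntegral_univ]
  refine integral_congr_ae (.of_forall fun y => ?_)
  simp [_root_.abs_of_pos (Real.exp_pos y)]

lemma cov_exp_int (g : ℝ → ℂ) :
    IntegrableOn g (Ioi (0:ℝ)) ↔ Integrable (fun y : ℝ => Real.exp y • g (Real.exp y)) := by
  have h := integrableOn_image_iff_integrableOn_abs_deriv_smul MeasurableSet.univ
    (fun x (_ : x ∈ univ) => (Real.hasDerivAt_exp x).hasDerivWithinAt) Real.exp_injective.injOn g
  rw [Set.image_univ, Real.range_exp] at h
  rw [h, integrableOn_univ]
  constructor <;> intro hh <;> refine hh.congr (.of_forall fun y => ?_) <;>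
    simp [_root_.abs_of_pos (Real.exp_pos y)]

lemma exp_smul_eq (S : ℂ) (s : ℂ) (y : ℝ) :
    Real.exp y • (((Real.exp y : ℝ) : ℂ) ^ (-s - 1) • S) = S * Complex.exp (-(s*y)) := by
  rw [smul_eq_mul, Complex.real_smul, Complex.ofReal_exp,
    Complex.cpow_def_of_ne_zero (Complex.exp_ne_zero _),
    Complex.log_exp (by simp [Real.pi_pos]) (by simp [Real.pi_pos.le]),
    ← mul_assoc, ← Complex.exp_add, mul_comm]
  congr 1
  ring

lemma Fgs_eq_mellin (s : ℂ) : Fgs χ φ s = mellin (Sphi χ φ) (-s) := by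
  rw [mellin, Fgs]
  rw [cov_exp (fun t => ((t:ℝ):ℂ) ^ (-s - 1) • Sphi χ φ t)]
  refine integral_congr_ae (.of_forall fun y => ?_)
  simpa using (exp_smul_eq (Sphi χ φ (Real.exp y)) s y).symm

lemma Fgs_differentiableAt (hχ : χ ≠ 1) {s : ℂ} (hs : 1/4 < s.re) :
    DifferentiableAt ℂ (Fgs χ φ) s := by
  have hm : DifferentiableAt ℂ (mellin (Sphi χ φ)) (-s) := by
    refine mellin_differentiableAt_of_isBigO_rpow (a := -(1/4)) (b := -s.re - 1)
      (Sphi_locInt χ φ) ?_ (by simpa using hs) (Sphi_isBigO_zero χ φ _) (by simp)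
    simpa using Sphi_isBigO_atTop χ φ hχ
  have : DifferentiableAt ℂ (fun z : ℂ => mellin (Sphi χ φ) (-z)) s :=
    DifferentiableAt.comp (g := mellin (Sphi χ φ)) (f := fun z : ℂ => -z) s hm
      (differentiable_id.neg s)
  exact this.congr_of_eventuallyEq (by filter_upwards with z; exact Fgs_eq_mellin χ φ z)

lemma Fgs_integrand_integrable (hχ : χ ≠ 1) {s : ℂ} (hs : 1/4 < s.re) :
    Integrable (fun y : ℝ => Sphi χ φ (Real.exp y) * Complex.exp (-(s*y))) := by
  have hconv : MellinConvergent (Sphi χ φ) (-s) := by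
    refine mellinConvergent_of_isBigO_rpow (a := -(1/4)) (b := -s.re - 1)
      (Sphi_locInt χ φ) ?_ (by simpa using hs) (Sphi_isBigO_zero χ φ _) (by simp)
    simpa using Sphi_isBigO_atTop χ φ hχ
  rw [MellinConvergent] at hconv
  have h2 := (cov_exp_int (fun t => ((t:ℝ):ℂ) ^ (-s - 1) • Sphi χ φ t)).mp hconv
  refine h2.congr (.of_forall fun y => ?_)
  simpa using exp_smul_eq (Sphi χ φ (Real.exp y)) s y

end Part3

section Part4

lemma integral_cexp_Ioi {s : ℂ} (hs : 0 < s.re) (a : ℝ) :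
    (∫ y in Ioi a, Complex.exp (-(s*y))) = Complex.exp (-(s*a)) / s := by
  have hs0 : s ≠ 0 := by
    intro h; rw [h] at hs; simp at hs
  have hint : IntegrableOn (fun y : ℝ => Complex.exp (-(s*y))) (Ioi a) := by
    refine (exp_neg_integrableOn_Ioi a hs).mono' ?_ ?_
    · exact (Complex.continuous_exp.comp (by continuity)).aestronglyMeasurable
    · refine .of_forall fun y => ?_
      rw [Complex.norm_exp]
      simp
  have htend := intervalIntegral_tendsto_integral_Ioi a hint tendsto_id
  have heval : ∀ b : ℝ, (∫ y in a..b, Complex.exp (-(s*y)))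
      = (Complex.exp (-s*b) - Complex.exp (-s*a)) / (-s) := by
    intro b
    rw [show (fun y : ℝ => Complex.exp (-(s*(y:ℂ)))) = fun y : ℝ => Complex.exp ((-s)*(y:ℂ))
      by funext y; ring_nf]
    exact integral_exp_mul_complex (by simpa using hs0)
  have hlim : Tendsto (fun b : ℝ => (Complex.exp (-s*b) - Complex.exp (-s*a)) / (-s))
      atTop (𝓝 ((0 - Complex.exp (-s*a)) / (-s))) := by
    refine Tendsto.div_const ?_ _
    refine Tendsto.sub_const ?_ _
    rw [tendsto_zero_iff_norm_tendsto_zero]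
    have : (fun b : ℝ => ‖Complex.exp (-s*b)‖) = fun b : ℝ => Real.exp (-(s.re * b)) := by
      funext b; rw [Complex.norm_exp]; simp
    rw [this]
    exact Real.tendsto_exp_neg_atTop_nhds_zero.comp (Tendsto.const_mul_atTop hs tendsto_id)
  have h := tendsto_nhds_unique (htend.congr fun b => (heval b).symm ▸ rfl) hlim
  rw [show ((0 : ℂ) - Complex.exp (-s*a)) / (-s) = Complex.exp (-(s*a)) / s by
    rw [zero_sub, neg_div_neg_eq]; ring_nf] at h
  rw [← h]

lemma integral_rexp_Ioi {b : ℝ} (hb : 0 < b) (a : ℝ) :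
    (∫ y in Ioi a, Real.exp (-(b*y))) = Real.exp (-(b*a)) / b := by
  have h := integral_cexp_Ioi (s := (b:ℂ)) (by simpa using hb) a
  have hcast : (∫ y in Ioi a, Complex.exp (-((b:ℂ)*(y:ℝ))))
      = ((∫ y in Ioi a, Real.exp (-(b*y)) : ℝ) : ℂ) := by
    rw [show (fun y : ℝ => Complex.exp (-((b:ℂ)*(y:ℝ))))
        = fun y : ℝ => ((Real.exp (-(b*y)) : ℝ) : ℂ) from
      funext fun y => by rw [Complex.ofReal_exp]; norm_cast]
    exact integral_ofReal
  rw [hcast] at h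
  have : ((Real.exp (-(b*a)) / b : ℝ) : ℂ) = Complex.exp (-((b:ℂ)*a)) / (b:ℂ) := by
    push_cast [Complex.ofReal_exp]
    norm_cast
  rw [← this] at h
  exact_mod_cast h

lemma gauss_integral {T : ℝ} (hT : 0 < T) (y : ℝ) :
    (∫ ξ : ℝ, Complex.exp ((-(1/(2*(T:ℂ)))) * ξ^2 + (-(I*y)) * ξ + 0))
      = (Real.sqrt (2*Real.pi*T) : ℂ) * Complex.exp (-(T/2 : ℂ) * y^2) := by
  have hb : (-(1/(2*(T:ℂ)))).re < 0 := by
    rw [show (1/(2*(T:ℂ))) = ((1/(2*T) : ℝ) : ℂ) by push_cast; ring,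
      ← Complex.ofReal_neg, Complex.ofReal_re]
    have : 0 < 1/(2*T) := by positivity
    linarith
  rw [integral_cexp_quadratic hb]
  congr 1
  · rw [show (↑Real.pi / -(-(1/(2*(T:ℂ))))) = ((2*Real.pi*T : ℝ) : ℂ) by
      push_cast; field_simp]
    rw [Real.sqrt_eq_rpow, Complex.ofReal_cpow (by positivity)]
    norm_num
  · congr 1
    have hT0 : (T:ℂ) ≠ 0 := by exact_mod_cast hT.ne'
    field_simp
    rw [I_sq]
    ring

end Part4

section Part5

lemma cexp_integrableOn {s : ℂ} (hs : 0 < s.re) (a : ℝ) :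
    IntegrableOn (fun y : ℝ => Complex.exp (-(s*y))) (Ici a) := by
  rw [integrableOn_Ici_iff_integrableOn_Ioi]
  refine (exp_neg_integrableOn_Ioi a hs).mono' ?_ ?_
  · exact (Complex.continuous_exp.comp (by continuity)).aestronglyMeasurable
  · refine .of_forall fun y => ?_
    rw [Complex.norm_exp]
    simp

variable {q : ℕ} [NeZero q] (χ : DirichletCharacter ℂ q) (φ : ℝ)

lemma Fgs_eq_L (hχ : χ ≠ 1) {s : ℂ} (hs : 1 < s.re) :
    Fgs χ φ s = DirichletCharacter.LFunction χ (s + I*φ) / s := by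
  have hs0 : 0 < s.re := by linarith
  have hsne : s ≠ 0 := fun h => by rw [h] at hs0; simp at hs0
  set c : ℕ → ℂ := fun n => χ n * (n:ℂ)^(-(I*(φ:ℂ))) with hc
  have hc0 : c 0 = 0 := by
    rw [hc]
    simp only [Nat.cast_zero]
    rw [chi_zero χ hχ, zero_mul]
  set g : ℕ → ℝ → ℂ :=
    fun n => Set.indicator (Ici (Real.log n)) (fun y => c n * Complex.exp (-(s*y))) with hg
  have hg0 : ∀ y, g 0 y = 0 := by
    intro y; rw [hg]; simp [hc0]
  have hpt : ∀ y : ℝ, Sphi χ φ (Real.exp y) * Complex.exp (-(s*y)) = ∑' n, g n y := by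
    intro y
    have hsupp : ∀ n ∉ Finset.Icc 0 ⌊Real.exp y⌋₊, g n y = 0 := by
      intro n hn
      simp only [Finset.mem_Icc] at hn
      have hn' : ⌊Real.exp y⌋₊ < n := by omega
      have h1 : Real.exp y < n := by
        calc Real.exp y < ⌊Real.exp y⌋₊ + 1 := Nat.lt_floor_add_one _
          _ ≤ n := by exact_mod_cast hn'
      have h2 : y < Real.log n := by
        rw [← Real.log_exp y]
        exact Real.log_lt_log (Real.exp_pos y) h1
      rw [hg]
      exact Set.indicator_of_notMem (by simpa using h2.not_ge) _
    rw [tsum_eq_sum hsupp]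
    have hset : Finset.Icc 0 ⌊Real.exp y⌋₊ = insert 0 (Finset.Icc 1 ⌊Real.exp y⌋₊) := by
      ext n
      simp only [Finset.mem_Icc, Finset.mem_insert]
      omega
    rw [hset, Finset.sum_insert (by simp), hg0, zero_add]
    have hterm : ∀ n ∈ Finset.Icc 1 ⌊Real.exp y⌋₊,
        g n y = c n * Complex.exp (-(s*y)) := by
      intro n hn
      simp only [Finset.mem_Icc] at hn
      have hle : (n : ℝ) ≤ Real.exp y :=
        (Nat.le_floor_iff (Real.exp_pos y).le).mp hn.2
      have hlog : Real.log n ≤ y := by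
        rw [← Real.log_exp y]
        exact Real.log_le_log (by exact_mod_cast hn.1) hle
      rw [hg]
      exact Set.indicator_of_mem hlog _
    rw [Finset.sum_congr rfl hterm, ← Finset.sum_mul]
    rfl
  have hgint : ∀ n, Integrable (g n) := by
    intro n
    rw [hg]
    simp only
    rw [integrable_indicator_iff measurableSet_Ici]
    exact (cexp_integrableOn hs0 _).const_mul _
  have hnormval : ∀ n : ℕ, 1 ≤ n →
      (∫ y : ℝ, ‖g n y‖) = ‖c n‖ * ((n:ℝ) ^ (-s.re) / s.re) := by
    intro n hn
    have hnR : (0:ℝ) < n := by exact_mod_cast hn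
    rw [hg]
    simp only
    rw [show (fun y : ℝ => ‖Set.indicator (Ici (Real.log n))
        (fun y => c n * Complex.exp (-(s*y))) y‖)
      = Set.indicator (Ici (Real.log n)) (fun y => ‖c n‖ * Real.exp (-(s.re*y))) from
        funext fun y => by
          rw [norm_indicator_eq_indicator_norm]
          congr 1
          funext z
          rw [norm_mul, Complex.norm_exp]
          congr 2
          simp]
    rw [integral_indicator measurableSet_Ici, integral_Ici_eq_integral_Ioi,
      integral_const_mul, integral_rexp_Ioi hs0]
    congr 2
    rw [Real.rpow_def_of_pos hnR]
    congr 1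
    ring
  have hsummable : Summable fun n : ℕ => ∫ y : ℝ, ‖g n y‖ := by
    have hmaj : Summable (fun n : ℕ => (1/s.re) * (n:ℝ) ^ (-s.re)) :=
      (Real.summable_nat_rpow.mpr (by linarith)).mul_left _
    refine Summable.of_nonneg_of_le
      (fun n => integral_nonneg fun y => norm_nonneg _) (fun n => ?_) hmaj
    rcases Nat.eq_zero_or_pos n with rfl | hn
    · have : (∫ y : ℝ, ‖g 0 y‖) = 0 := by
        simp only [hg0]
        simp
      rw [this]
      positivity
    · rw [hnormval n hn]
      have h1 : ‖c n‖ ≤ 1 := by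
        rw [hc]
        simp only
        rw [norm_mul]
        exact mul_le_one₀ (χ.norm_le_one _) (norm_nonneg _) (norm_fphi_le' φ n)
      have h2 : (0:ℝ) ≤ (n:ℝ) ^ (-s.re) / s.re := by positivity
      calc ‖c n‖ * ((n:ℝ) ^ (-s.re) / s.re) ≤ 1 * ((n:ℝ) ^ (-s.re) / s.re) :=
            mul_le_mul_of_nonneg_right h1 h2
        _ = (1/s.re) * (n:ℝ) ^ (-s.re) := by ring
  have hswap : (∫ y : ℝ, ∑' n, g n y) = ∑' n, ∫ y : ℝ, g n y :=
    (integral_tsum_of_summable_integral_norm hgint hsummable).symm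
  have hval : ∀ n : ℕ, (∫ y : ℝ, g n y) = LSeries.term (fun m => χ m) (s + I*φ) n / s := by
    intro n
    rcases Nat.eq_zero_or_pos n with rfl | hn
    · simp only [hg0, LSeries.term_zero, zero_div]
      simp
    · have hn0 : ((n:ℕ) : ℂ) ≠ 0 := Nat.cast_ne_zero.mpr (by omega)
      rw [hg]
      simp only
      rw [integral_indicator measurableSet_Ici, integral_Ici_eq_integral_Ioi,
        integral_const_mul, integral_cexp_Ioi hs0]
      have hkey : Complex.exp (-(s * (Real.log n : ℝ))) = (n:ℂ) ^ (-s) := by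
        rw [Complex.cpow_def_of_ne_zero hn0]
        rw [show ((n:ℕ):ℂ) = (((n:ℝ)):ℂ) by push_cast; rfl,
          ← Complex.ofReal_log (by positivity : (0:ℝ) ≤ (n:ℝ))]
        congr 1
        ring
      rw [hkey, LSeries.term_of_ne_zero (by omega : n ≠ 0)]
      rw [hc]
      simp only
      rw [show (-(I*(φ:ℂ))) = (-(I*(φ:ℂ))) by rfl]
      rw [div_div, ← mul_div_assoc, mul_assoc, ← Complex.cpow_add _ _ hn0]
      rw [show (-(I*(φ:ℂ)) + -s) = -(s + I*φ) by ring, Complex.cpow_neg]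
      ring
  calc Fgs χ φ s = ∫ y : ℝ, ∑' n, g n y := integral_congr_ae (.of_forall hpt)
    _ = ∑' n, ∫ y : ℝ, g n y := hswap
    _ = ∑' n, LSeries.term (fun m => χ m) (s + I*φ) n / s := tsum_congr hval
    _ = (∑' n, LSeries.term (fun m => χ m) (s + I*φ) n) / s := tsum_div_const
    _ = LSeries (fun m => χ m) (s + I*φ) / s := rfl
    _ = DirichletCharacter.LFunction χ (s + I*φ) / s := by
        rw [DirichletCharacter.LFunction_eq_LSeries χ (by simp [add_re, hs] : 1 < (s + I*φ).re)]

end Part5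

section Part6

variable {q : ℕ} [NeZero q] (χ : DirichletCharacter ℂ q) (φ : ℝ)

lemma Fgs_eq_L' (hχ : χ ≠ 1) {s : ℂ} (hs : 1/2 ≤ s.re) :
    Fgs χ φ s = DirichletCharacter.LFunction χ (s + I*φ) / s := by
  set U : Set ℂ := {z : ℂ | 1/4 < z.re} with hU
  have hUopen : IsOpen U := isOpen_lt continuous_const continuous_re
  have hUconn : IsPreconnected U := Convex.isPreconnected (convex_halfSpace_re_gt (1/4))
  have hf : AnalyticOnNhd ℂ (fun z => z * Fgs χ φ z) U := by
    refine DifferentiableOn.analyticOnNhd (fun z hz => ?_) hUopen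
    exact (differentiableAt_id.mul (Fgs_differentiableAt χ φ hχ hz)).differentiableWithinAt
  have hgdiff : Differentiable ℂ (fun z : ℂ => DirichletCharacter.LFunction χ (z + I*φ)) :=
    (DirichletCharacter.differentiable_LFunction hχ).comp (differentiable_id.add_const _)
  have hgan : AnalyticOnNhd ℂ (fun z : ℂ => DirichletCharacter.LFunction χ (z + I*φ)) U :=
    hgdiff.differentiableOn.analyticOnNhd hUopen
  have h2U : (2:ℂ) ∈ U := by simp only [hU, mem_setOf_eq]; norm_num
  have hev : (fun z => z * Fgs χ φ z)
      =ᶠ[nhds (2:ℂ)] (fun z : ℂ => DirichletCharacter.LFunction χ (z + I*φ)) := by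
    have hmem : {z : ℂ | 1 < z.re} ∈ nhds (2:ℂ) :=
      (isOpen_lt continuous_const continuous_re).mem_nhds (by norm_num)
    filter_upwards [hmem] with z hz
    have hzne : z ≠ 0 := by
      intro h
      rw [h] at hz
      simp only [mem_setOf_eq, zero_re] at hz
      linarith
    rw [Fgs_eq_L χ φ hχ hz, mul_comm, div_mul_cancel₀ _ hzne]
  have heq := hf.eqOn_of_preconnected_of_eventuallyEq hgan hUconn h2U hev
  have hsU : s ∈ U := by simp only [hU, mem_setOf_eq]; linarith
  have hkey := heq hsU
  have hsne : s ≠ 0 := by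
    intro h
    rw [h] at hs
    norm_num at hs
  rw [eq_div_iff hsne, mul_comm]
  exact hkey

end Part6

end GSaux

set_option maxHeartbeats 1000000 in
open MeasureTheory in
/-- Lemma 2.2 of Granville–Soundararajan, "Large character sums: Burgess's
theorem and zeros of L-functions". -/
theorem statement_10 (q : ℕ) [NeZero q] (χ : DirichletCharacter ℂ q) (hχ : χ ≠ 1)
    (φ T lam : ℝ) (hT : 0 < T) (hlam0 : 0 ≤ lam) (hlam : lam ≤ 1 / 2) :
    (Real.sqrt (2 * Real.pi * T) : ℂ) *
        ∫ y : ℝ, Sphi χ φ (Real.exp y) / (Real.exp y : ℂ) *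
          (Real.exp (lam * y - T / 2 * y ^ 2) : ℂ) =
      ∫ ξ : ℝ, χ.LFunction (1 - lam + I * φ + I * ξ) / (1 - lam + I * ξ) *
        (Real.exp (-ξ ^ 2 / (2 * T)) : ℂ) := by
  have hTne : (T:ℂ) ≠ 0 := by exact_mod_cast hT.ne'
  set f : ℝ → ℝ → ℂ := fun ξ y => Sphi χ φ (Real.exp y) *
      (Complex.exp (-((1 - lam + I*ξ) * y)) * (Real.exp (-ξ^2/(2*T)) : ℂ)) with hf
  -- Step A: rewrite the RHS using Fgs_eq_L' and pull the weight inside the integral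
  have hre : ∀ ξ : ℝ, ((1:ℂ) - lam + I*ξ).re = 1 - lam := by
    intro ξ; simp
  have hstepA : ∀ ξ : ℝ, χ.LFunction (1 - lam + I * φ + I * ξ) / (1 - lam + I * ξ) *
      (Real.exp (-ξ ^ 2 / (2 * T)) : ℂ) = ∫ y : ℝ, f ξ y := by
    intro ξ
    have h1 := Fgs_eq_L' χ φ hχ (s := 1 - (lam:ℂ) + I*ξ) (by rw [hre]; linarith)
    rw [show (1 - (lam:ℂ) + I*ξ) + I*φ = 1 - lam + I*φ + I*ξ by ring] at h1
    rw [← h1, Fgs, ← integral_mul_const]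
    refine integral_congr_ae (.of_forall fun y => ?_)
    simp only [hf]
    ring
  -- Step B: integrability on the product space
  have hmeas : AEStronglyMeasurable (Function.uncurry f) ((volume : Measure ℝ).prod volume) := by
    refine AEStronglyMeasurable.mul ?_ ?_
    · exact ((Sphi_measurable χ φ).comp
        (Real.measurable_exp.comp measurable_snd)).aestronglyMeasurable
    · refine Continuous.aestronglyMeasurable ?_
      refine Continuous.mul ?_ ?_
      · refine Complex.continuous_exp.comp ?_
        continuity
      · refine Continuous.comp Complex.continuous_ofReal ?_
        continuity
  have hbound : Integrable (fun p : ℝ × ℝ => Real.exp (-(1/(2*T)) * p.1^2) *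
      ‖Sphi χ φ (Real.exp p.2) * Complex.exp (-(((1 - lam : ℝ) : ℂ) * p.2))‖)
      ((volume : Measure ℝ).prod volume) := by
    refine Integrable.mul_prod (μ := (volume : Measure ℝ)) (ν := (volume : Measure ℝ))
      (f := fun ξ : ℝ => Real.exp (-(1/(2*T)) * ξ^2))
      (g := fun y : ℝ => ‖Sphi χ φ (Real.exp y) * Complex.exp (-(((1 - lam : ℝ) : ℂ) * y))‖)
      (integrable_exp_neg_mul_sq (b := 1/(2*T)) (by positivity)) ?_
    exact (Fgs_integrand_integrable χ φ hχ (s := ((1 - lam : ℝ) : ℂ))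
      (by simp; linarith)).norm
  have hint : Integrable (Function.uncurry f) ((volume : Measure ℝ).prod volume) := by
    refine hbound.mono' hmeas (.of_forall fun p => ?_)
    rw [Function.uncurry]
    simp only [hf]
    rw [norm_mul, norm_mul, norm_mul]
    rw [Complex.norm_exp]
    rw [Complex.norm_real, Real.norm_eq_abs,
      _root_.abs_of_pos (Real.exp_pos _)]
    rw [Complex.norm_exp]
    have h1 : (-((1 - (lam:ℂ) + I*p.1) * p.2)).re = -((1-lam) * p.2) := by
      simp [mul_re]
    have h2 : (-(((1 - lam : ℝ) : ℂ) * p.2)).re = -((1-lam) * p.2) := by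
      simp
    rw [h1, h2]
    have h3 : Real.exp (-p.1^2/(2*T)) = Real.exp (-(1/(2*T)) * p.1^2) := by
      congr 1; field_simp
    rw [h3]
    ring_nf
    exact le_refl _
  -- Step C: swap
  have hswap := integral_integral_swap hint
  -- Step D: inner integral over ξ via Gaussian
  have hinner : ∀ y : ℝ, (∫ ξ : ℝ, f ξ y) = (Real.sqrt (2*Real.pi*T) : ℂ) *
      (Sphi χ φ (Real.exp y) * Complex.exp (-((1 - (lam:ℂ)) * y)) *
        Complex.exp (-((T:ℂ)/2) * y^2)) := by
    intro y
    have hptw : ∀ ξ : ℝ, f ξ y = (Sphi χ φ (Real.exp y) *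
        Complex.exp (-((1 - (lam:ℂ)) * y))) *
        Complex.exp ((-(1/(2*(T:ℂ)))) * ξ^2 + (-(I*y)) * ξ + 0) := by
      intro ξ
      simp only [hf]
      rw [show ((-(1/(2*(T:ℂ)))) * ξ^2 + (-(I*y)) * ξ + 0)
          = (-((1/(2*(T:ℂ))) * ξ^2)) + (-((I*y) * ξ)) by ring, Complex.exp_add]
      rw [show (-((1 - (lam:ℂ) + I*↑ξ) * y)) = (-((1 - (lam:ℂ)) * y)) + (-((I*y) * ξ)) by ring,
        Complex.exp_add]
      have hcast : ((Real.exp (-ξ^2/(2*T)) : ℝ) : ℂ) = Complex.exp (-((1/(2*(T:ℂ))) * ξ^2)) := by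
        rw [Complex.ofReal_exp]
        congr 1
        push_cast
        field_simp
      rw [hcast]
      ring
    rw [integral_congr_ae (.of_forall hptw), integral_const_mul, gauss_integral hT y]
    ring
  -- Step E: assemble
  have hLHSptw : ∀ y : ℝ, Sphi χ φ (Real.exp y) / (Real.exp y : ℂ) *
      (Real.exp (lam * y - T / 2 * y ^ 2) : ℂ)
      = Sphi χ φ (Real.exp y) * Complex.exp (-((1 - (lam:ℂ)) * y)) *
        Complex.exp (-((T:ℂ)/2) * y^2) := by
    intro y
    rw [Complex.ofReal_exp, Complex.ofReal_exp, div_mul_eq_mul_div, mul_div_assoc,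
      ← Complex.exp_sub, mul_assoc, ← Complex.exp_add]
    congr 1
    push_cast
    ring
  calc (Real.sqrt (2 * Real.pi * T) : ℂ) *
        ∫ y : ℝ, Sphi χ φ (Real.exp y) / (Real.exp y : ℂ) *
          (Real.exp (lam * y - T / 2 * y ^ 2) : ℂ)
      = ∫ y : ℝ, (Real.sqrt (2*Real.pi*T) : ℂ) *
          (Sphi χ φ (Real.exp y) * Complex.exp (-((1 - (lam:ℂ)) * y)) *
            Complex.exp (-((T:ℂ)/2) * y^2)) := by
        rw [← integral_const_mul]
        refine integral_congr_ae (.of_forall fun y => ?_)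
        dsimp only
        rw [hLHSptw y]
    _ = ∫ y : ℝ, ∫ ξ : ℝ, f ξ y := by
        exact integral_congr_ae (.of_forall fun y => (hinner y).symm)
    _ = ∫ ξ : ℝ, ∫ y : ℝ, f ξ y := hswap.symm
    _ = ∫ ξ : ℝ, χ.LFunction (1 - lam + I * φ + I * ξ) / (1 - lam + I * ξ) *
        (Real.exp (-ξ ^ 2 / (2 * T)) : ℂ) :=
        integral_congr_ae (.of_forall fun ξ => (hstepA ξ).symm)
end

section
/- Let χ be a non-principal Dirichlet character mod q, and let s = σ + it be a complex number with 0 < σ < 1. Then |L(s,χ)| ≤ |s|·( (q^{1−σ} − 1)/(1−σ) + q^{1−σ}/σ ). -/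
open Complex Finset MeasureTheory Set Filter Topology

set_option linter.unusedSectionVars false

namespace GS18Section

variable {q : ℕ} [NeZero q] (χ : DirichletCharacter ℂ q)


lemma GS18.sum_range_cast (f : ZMod q → ℂ) : ∑ k ∈ Finset.range q, f (k : ZMod q) = ∑ a : ZMod q, f a := by
  refine Finset.sum_nbij' (fun k => (k : ZMod q)) (fun a => a.val) ?_ ?_ ?_ ?_ ?_
  · intro a ha; exact Finset.mem_univ _
  · intro a ha; exact Finset.mem_range.mpr (ZMod.val_lt a)
  · intro a ha; exact ZMod.val_cast_of_lt (Finset.mem_range.mp ha)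
  · intro a ha; simp [ZMod.natCast_val, ZMod.cast_id]
  · intro a ha; rfl

lemma GS18.sum_range_q_eq_zero (hχ : χ ≠ 1) : ∑ k ∈ Finset.range q, χ (k : ZMod q) = 0 := by
  rw [GS18.sum_range_cast]
  exact χ.sum_eq_zero_of_ne_one hχ

lemma GS18.sum_range_le_q (hχ : χ ≠ 1) (n : ℕ) : ‖∑ k ∈ Finset.range n, χ (k : ZMod q)‖ ≤ q := by
  induction n using Nat.strong_induction_on with
  | _ n ih =>
    rcases le_or_gt n q with h | h
    · calc ‖∑ k ∈ Finset.range n, χ (k : ZMod q)‖ ≤ ∑ k ∈ Finset.range n, ‖χ (k : ZMod q)‖ :=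
        norm_sum_le _ _
      _ ≤ ∑ k ∈ Finset.range n, 1 := Finset.sum_le_sum fun k _ => χ.norm_le_one _
      _ = n := by simp
      _ ≤ q := by exact_mod_cast h
    · have hq : 0 < q := Nat.pos_of_ne_zero (NeZero.ne q)
      have hn : n = q + (n - q) := by omega
      rw [hn, ← Finset.sum_range_add_sum_Ico _ (Nat.le_add_right q (n - q)),
        GS18.sum_range_q_eq_zero χ hχ, zero_add, Finset.sum_Ico_eq_sum_range]
      simp only [Nat.add_sub_cancel_left]
      have : ∀ k, χ (((q + k : ℕ) : ZMod q)) = χ ((k : ℕ) : ZMod q) := by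
        intro k; push_cast; rw [ZMod.natCast_self, zero_add]
      simp_rw [this]
      exact ih (n - q) (by omega)

lemma GS18.q_ne_one (hχ : χ ≠ 1) : q ≠ 1 := fun h => hχ (χ.level_one' h)

lemma GS18.chi_zero_eq (hχ : χ ≠ 1) : χ ((0 : ℕ) : ZMod q) = 0 := by
  have h1 : 1 < q := lt_of_le_of_ne (Nat.one_le_iff_ne_zero.mpr (NeZero.ne q))
    (Ne.symm (GS18.q_ne_one χ hχ))
  haveI : Fact (1 < q) := ⟨h1⟩
  rw [Nat.cast_zero]
  exact χ.map_nonunit not_isUnit_zero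

lemma GS18.sum_Icc_le_q (hχ : χ ≠ 1) (n : ℕ) : ‖∑ k ∈ Finset.Icc 0 n, χ (k : ZMod q)‖ ≤ q := by
  rw [show Finset.Icc 0 n = Finset.range (n + 1) by rw [← Nat.Ico_zero_eq_range, Finset.Ico_add_one_right_eq_Icc]]
  exact GS18.sum_range_le_q χ hχ _

lemma GS18.sum_Icc_le_card (hχ : χ ≠ 1) (n : ℕ) : ‖∑ k ∈ Finset.Icc 0 n, χ (k : ZMod q)‖ ≤ n := by
  rw [Finset.Icc_eq_cons_Ioc (Nat.zero_le n), Finset.sum_cons, GS18.chi_zero_eq χ hχ, zero_add]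
  calc ‖∑ k ∈ Finset.Ioc 0 n, χ (k : ZMod q)‖ ≤ ∑ k ∈ Finset.Ioc 0 n, ‖χ (k : ZMod q)‖ :=
      norm_sum_le _ _
    _ ≤ ∑ k ∈ Finset.Ioc 0 n, 1 := Finset.sum_le_sum fun k _ => χ.norm_le_one _
    _ = n := by simp


noncomputable def GS18.gsum : ℝ → ℂ := fun x => ∑ k ∈ Finset.Icc 0 ⌊x⌋₊, χ (k : ZMod q)

lemma GS18.gsum_measurable : Measurable (GS18.gsum χ) :=
  (measurable_from_nat (f := fun n : ℕ => ∑ k ∈ Finset.Icc 0 n, χ (k : ZMod q))).comp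
    Nat.measurable_floor

lemma GS18.cpow_aesm (w : ℂ) {c : ℝ} (hc : 0 < c) :
    AEStronglyMeasurable (fun x : ℝ => (x : ℂ) ^ w) (volume.restrict (Set.Ioi c)) := by
  refine ContinuousOn.aestronglyMeasurable ?_ measurableSet_Ioi
  exact fun t ht => (continuousAt_ofReal_cpow_const t w
    (Or.inr (ne_of_gt (lt_trans hc ht)))).continuousWithinAt

lemma GS18.norm_cpow_eq (w : ℂ) {x : ℝ} (hx : 0 < x) : ‖(x : ℂ) ^ w‖ = x ^ w.re := by
  rw [norm_cpow_eq_rpow_re_of_pos hx]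

lemma GS18.gsum_le_q (hχ : χ ≠ 1) (x : ℝ) : ‖GS18.gsum χ x‖ ≤ q := GS18.sum_Icc_le_q χ hχ _

lemma GS18.gsum_le_self (hχ : χ ≠ 1) {x : ℝ} (hx : 0 ≤ x) : ‖GS18.gsum χ x‖ ≤ x :=
  (GS18.sum_Icc_le_card χ hχ _).trans (Nat.floor_le hx)

lemma GS18.integrableOn_K (hχ : χ ≠ 1) {z : ℂ} (hz : 0 < z.re) :
    IntegrableOn (fun x : ℝ => (x : ℂ) ^ (-z - 1) * GS18.gsum χ x) (Set.Ioi 1) := by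
  have hb : IntegrableOn (fun x : ℝ => (q : ℝ) * x ^ (-z.re - 1)) (Set.Ioi 1) :=
    (integrableOn_Ioi_rpow_of_lt (by linarith) one_pos).const_mul _
  refine Integrable.mono' hb ((GS18.cpow_aesm (-z-1) one_pos).mul
    (GS18.gsum_measurable χ).aestronglyMeasurable.restrict) ?_
  filter_upwards [ae_restrict_mem measurableSet_Ioi] with x hx
  have hx0 : (0:ℝ) < x := lt_trans one_pos hx
  rw [norm_mul, GS18.norm_cpow_eq _ hx0, show (-z - 1).re = -z.re - 1 by simp, mul_comm ((q:ℝ)) _]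
  exact mul_le_mul_of_nonneg_left (GS18.gsum_le_q χ hχ x) (Real.rpow_nonneg hx0.le _)

lemma GS18.hasDerivAt_cpow_neg (z : ℂ) {t : ℝ} (ht : 0 < t) :
    HasDerivAt (fun t : ℝ => (t : ℂ) ^ (-z)) (-z * (t : ℂ) ^ (-z - 1)) t := by
  have h := (HasDerivAt.cpow_const (c := -z) (hasDerivAt_id ((t : ℝ) : ℂ))
    (Or.inl (by simpa using ht))).comp_ofReal
  simpa using h

lemma GS18.abel_step (hχ : χ ≠ 1) (z : ℂ) (N : ℕ) :
    ∑ k ∈ Finset.Icc 0 N, (k : ℂ) ^ (-z) * χ (k : ZMod q) =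
      (N : ℂ) ^ (-z) * GS18.gsum χ (N : ℝ) -
        ∫ t in Set.Ioc 1 (N : ℝ), (-z * (t : ℂ) ^ (-z - 1)) * GS18.gsum χ t := by
  have hdiff : ∀ t ∈ Set.Icc (1:ℝ) (N:ℝ), DifferentiableAt ℝ (fun t : ℝ => (t : ℂ) ^ (-z)) t :=
    fun t ht => (GS18.hasDerivAt_cpow_neg z (lt_of_lt_of_le zero_lt_one ht.1)).differentiableAt
  have hcont : ContinuousOn (fun t : ℝ => -z * (t : ℂ) ^ (-z - 1)) (Set.Icc 1 (N:ℝ)) :=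
    fun t ht => (continuousAt_const.mul (continuousAt_ofReal_cpow_const t _
      (Or.inr (ne_of_gt (lt_of_lt_of_le one_pos ht.1))))).continuousWithinAt
  have hint : IntegrableOn (deriv (fun t : ℝ => (t : ℂ) ^ (-z))) (Set.Icc 1 (N:ℝ)) := by
    refine (hcont.integrableOn_compact isCompact_Icc).congr_fun ?_ measurableSet_Icc
    exact fun t ht => ((GS18.hasDerivAt_cpow_neg z (lt_of_lt_of_le one_pos ht.1)).deriv).symm
  have key := sum_mul_eq_sub_integral_mul₀ (c := fun k => χ (k : ZMod q))
    (f := fun t : ℝ => (t : ℂ) ^ (-z)) (GS18.chi_zero_eq χ hχ) (N : ℝ) hdiff hint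
  rw [Nat.floor_natCast] at key
  have hs : ∀ k : ℕ, ((k : ℝ) : ℂ) ^ (-z) * χ (k : ZMod q) = (k : ℂ) ^ (-z) * χ (k : ZMod q) := by
    intro k; norm_num
  simp only [hs] at key
  rw [key, show ((N:ℝ):ℂ) = (N:ℂ) by norm_num]
  rw [MeasureTheory.setIntegral_congr_fun measurableSet_Ioc
    (fun t ht => by rw [(GS18.hasDerivAt_cpow_neg z (lt_trans one_pos ht.1)).deriv])]
  simp [GS18.gsum, Nat.floor_natCast]

lemma GS18.iUnion_Ioc_natCast : (⋃ N : ℕ, Set.Ioc (1:ℝ) (N:ℝ)) = Set.Ioi 1 := by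
  ext x
  simp only [Set.mem_iUnion, Set.mem_Ioc, Set.mem_Ioi]
  constructor
  · rintro ⟨N, h1, _⟩; exact h1
  · intro h1
    obtain ⟨N, hN⟩ := exists_nat_ge x
    exact ⟨N, h1, hN⟩

lemma GS18.tendsto_abel (hχ : χ ≠ 1) {z : ℂ} (hz : 0 < z.re) :
    Tendsto (fun N : ℕ => ∑ k ∈ Finset.Icc 0 N, (k : ℂ) ^ (-z) * χ (k : ZMod q)) atTop
      (𝓝 (z * ∫ x in Set.Ioi (1:ℝ), (x : ℂ) ^ (-z - 1) * GS18.gsum χ x)) := by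
  have h1 : Tendsto (fun N : ℕ => (N : ℂ) ^ (-z) * GS18.gsum χ (N : ℝ)) atTop (𝓝 0) := by
    apply squeeze_zero_norm' (a := fun N : ℕ => (N : ℝ) ^ (-z.re) * (q : ℝ))
    · filter_upwards [eventually_ge_atTop 1] with N hN
      rw [norm_mul]
      have hN0 : (0:ℝ) < (N:ℝ) := by exact_mod_cast hN
      have : ‖(N : ℂ) ^ (-z)‖ = (N:ℝ) ^ (-z.re) := by
        rw [show (N : ℂ) = ((N : ℝ) : ℂ) by norm_num, GS18.norm_cpow_eq _ hN0, neg_re]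
      rw [this]
      exact mul_le_mul_of_nonneg_left (GS18.gsum_le_q χ hχ _) (Real.rpow_nonneg hN0.le _)
    · have := ((tendsto_rpow_neg_atTop hz).comp
        (tendsto_natCast_atTop_atTop (R := ℝ))).mul_const (q : ℝ)
      simpa using this
  have h2 : Tendsto (fun N : ℕ => ∫ t in Set.Ioc 1 (N:ℝ), (-z * (t : ℂ) ^ (-z - 1)) * GS18.gsum χ t)
      atTop (𝓝 (∫ t in Set.Ioi (1:ℝ), (-z * (t : ℂ) ^ (-z - 1)) * GS18.gsum χ t)) := by
    have hmono : Monotone (fun N : ℕ => Set.Ioc (1:ℝ) (N:ℝ)) := fun a b hab =>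
      Set.Ioc_subset_Ioc_right (by exact_mod_cast hab)
    have hint : IntegrableOn (fun t : ℝ => (-z * (t : ℂ) ^ (-z - 1)) * GS18.gsum χ t)
        (⋃ N : ℕ, Set.Ioc (1:ℝ) (N:ℝ)) := by
      rw [GS18.iUnion_Ioc_natCast]
      simpa [mul_assoc, IntegrableOn] using (GS18.integrableOn_K χ hχ hz).const_mul (-z)
    have := tendsto_setIntegral_of_monotone (fun N : ℕ => measurableSet_Ioc) hmono hint
    rwa [GS18.iUnion_Ioc_natCast] at this
  have heq : (fun N : ℕ => ∑ k ∈ Finset.Icc 0 N, (k : ℂ) ^ (-z) * χ (k : ZMod q)) =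
      fun N : ℕ => (N : ℂ) ^ (-z) * GS18.gsum χ (N : ℝ) -
        ∫ t in Set.Ioc 1 (N : ℝ), (-z * (t : ℂ) ^ (-z - 1)) * GS18.gsum χ t :=
    funext fun N => GS18.abel_step χ hχ z N
  rw [heq]
  have := h1.sub h2
  rw [zero_sub] at this
  convert this using 2
  rw [show (fun t : ℝ => (-z * (t : ℂ) ^ (-z - 1)) * GS18.gsum χ t)
      = fun t : ℝ => -z * ((t : ℂ) ^ (-z - 1) * GS18.gsum χ t) from funext fun t => by ring]
  rw [integral_const_mul]
  ring

lemma GS18.rep_gt_one (hχ : χ ≠ 1) {z : ℂ} (hz : 1 < z.re) :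
    χ.LFunction z = z * ∫ x in Set.Ioi (1:ℝ), (x : ℂ) ^ (-z - 1) * GS18.gsum χ x := by
  rw [DirichletCharacter.LFunction_eq_LSeries χ hz]
  have hsum : LSeriesSummable (χ ·) z := ZMod.LSeriesSummable_of_one_lt_re χ hz
  have h1 : Tendsto (fun n : ℕ => ∑ k ∈ Finset.range n, LSeries.term (χ ·) z k) atTop
      (𝓝 (LSeries (χ ·) z)) := hsum.hasSum.tendsto_sum_nat
  have h2 := h1.comp (tendsto_add_atTop_nat 1)
  have h3 : ∀ N : ℕ, ∑ k ∈ Finset.range (N + 1), LSeries.term (χ ·) z k =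
      ∑ k ∈ Finset.Icc 0 N, (k : ℂ) ^ (-z) * χ (k : ZMod q) := by
    intro N
    rw [show Finset.Icc 0 N = Finset.range (N + 1) by
      rw [← Nat.Ico_zero_eq_range, Finset.Ico_add_one_right_eq_Icc]]
    refine Finset.sum_congr rfl fun k _ => ?_
    rcases Nat.eq_zero_or_pos k with rfl | hk
    · have h0 : χ (0 : ZMod q) = 0 := by simpa using GS18.chi_zero_eq χ hχ
      simp [LSeries.term, h0]
    · rw [LSeries.term_of_ne_zero (Nat.pos_iff_ne_zero.mp hk), cpow_neg, div_eq_mul_inv, mul_comm]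
  have h2' : Tendsto (fun N : ℕ => ∑ k ∈ Finset.Icc 0 N, (k : ℂ) ^ (-z) * χ (k : ZMod q)) atTop
      (𝓝 (LSeries (χ ·) z)) := by
    refine h2.congr fun N => ?_
    simp only [Function.comp_apply]
    exact h3 N
  exact tendsto_nhds_unique h2' (GS18.tendsto_abel χ hχ (by linarith))

lemma GS18.mellin_eq (hχ : χ ≠ 1) {w : ℂ} (hw : 0 < w.re) :
    mellin (Set.indicator (Set.Ioi 1) (GS18.gsum χ)) (-w) =
      ∫ x in Set.Ioi (1:ℝ), (x : ℂ) ^ (-w - 1) * GS18.gsum χ x := by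
  rw [mellin]
  simp only [smul_eq_mul]
  have : (fun t : ℝ => (t : ℂ) ^ (-w - 1) * Set.indicator (Set.Ioi 1) (GS18.gsum χ) t) =
      Set.indicator (Set.Ioi 1) (fun t : ℝ => (t : ℂ) ^ (-w - 1) * GS18.gsum χ t) := by
    funext t
    by_cases ht : t ∈ Set.Ioi (1:ℝ)
    · simp [Set.indicator_of_mem ht]
    · simp [Set.indicator_of_notMem ht]
  rw [this, MeasureTheory.integral_indicator measurableSet_Ioi,
    Measure.restrict_restrict measurableSet_Ioi,
    Set.inter_eq_self_of_subset_left (Set.Ioi_subset_Ioi zero_le_one)]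

lemma GS18.rep_strip (hχ : χ ≠ 1) {z : ℂ} (hz : 0 < z.re) :
    χ.LFunction z = z * ∫ x in Set.Ioi (1:ℝ), (x : ℂ) ^ (-z - 1) * GS18.gsum χ x := by
  set f0 : ℝ → ℂ := Set.indicator (Set.Ioi 1) (GS18.gsum χ) with hf0
  set U : Set ℂ := {w : ℂ | 0 < w.re} with hU
  have hUo : IsOpen U := isOpen_lt continuous_const continuous_re
  have hUp : IsPreconnected U := (convex_halfSpace_re_gt 0).isPreconnected
  have hf0m : AEStronglyMeasurable f0 (volume : Measure ℝ) :=
    ((GS18.gsum_measurable χ).indicator measurableSet_Ioi).aestronglyMeasurable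
  have hf0b : ∀ x : ℝ, ‖f0 x‖ ≤ q := by
    intro x
    by_cases hx : x ∈ Set.Ioi (1:ℝ)
    · rw [hf0, Set.indicator_of_mem hx]; exact GS18.gsum_le_q χ hχ x
    · rw [hf0, Set.indicator_of_notMem hx]; simp
  have hfc : MeasureTheory.LocallyIntegrableOn f0 (Set.Ioi 0) :=
    ((memLp_top_of_bound hf0m _ (Filter.Eventually.of_forall hf0b)).locallyIntegrable
      le_top).locallyIntegrableOn _
  have hf_top : f0 =O[atTop] fun x : ℝ => x ^ (-(0:ℝ)) := by
    refine Asymptotics.IsBigO.of_bound (q : ℝ) (Filter.Eventually.of_forall fun x => ?_)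
    simpa [Real.rpow_zero] using hf0b x
  have hf_bot : ∀ e : ℝ, f0 =O[𝓝[>] (0:ℝ)] fun x : ℝ => x ^ e := by
    intro e
    refine Asymptotics.IsBigO.of_bound 0 ?_
    filter_upwards [(eventually_lt_nhds one_pos).filter_mono nhdsWithin_le_nhds] with x hx
    rw [hf0, Set.indicator_of_notMem (by simp only [Set.mem_Ioi]; push_neg; linarith)]
    simp
  have hFd : DifferentiableOn ℂ (fun w : ℂ => w * mellin f0 (-w)) U := by
    intro w hw
    have hw' : 0 < w.re := hw
    have hd : DifferentiableAt ℂ (mellin f0) (-w) := by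
      refine mellin_differentiableAt_of_isBigO_rpow (a := 0) (b := -(w.re + 1))
        hfc hf_top (by simpa using hw') ?_ (by simp only [neg_re]; linarith)
      simpa using hf_bot (w.re + 1)
    exact (differentiableAt_id.mul (hd.comp w differentiable_neg.differentiableAt))
      |>.differentiableWithinAt
  have hGd : DifferentiableOn ℂ χ.LFunction U :=
    (DirichletCharacter.differentiable_LFunction hχ).differentiableOn
  have heq : Set.EqOn χ.LFunction (fun w : ℂ => w * mellin f0 (-w)) U := by
    refine AnalyticOnNhd.eqOn_of_preconnected_of_eventuallyEq
      (hGd.analyticOnNhd hUo) (hFd.analyticOnNhd hUo) hUp (z₀ := 2)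
      (by simp [hU, Set.mem_setOf_eq]) ?_
    have hnhds : {w : ℂ | 1 < w.re} ∈ 𝓝 (2 : ℂ) :=
      (isOpen_lt continuous_const continuous_re).mem_nhds (by simp [Set.mem_setOf_eq])
    filter_upwards [hnhds] with w hw
    have hw1 : 1 < w.re := hw
    show DirichletCharacter.LFunction χ w = w * mellin f0 (-w)
    rw [GS18.rep_gt_one χ hχ hw1, hf0, GS18.mellin_eq χ hχ (by linarith : (0:ℝ) < w.re)]
  have h := heq hz
  rw [show (fun w : ℂ => w * mellin f0 (-w)) z = z * mellin f0 (-z) from rfl, hf0,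
    GS18.mellin_eq χ hχ hz] at h
  exact h

theorem GS18.final (hχ : χ ≠ 1) (s : ℂ) (h0 : 0 < s.re) (h1 : s.re < 1) :
    ‖χ.LFunction s‖ ≤ ‖s‖ *
      (((q : ℝ) ^ (1 - s.re) - 1) / (1 - s.re) + (q : ℝ) ^ (1 - s.re) / s.re) := by
  have hq2 : 2 ≤ q := by
    rcases Nat.lt_or_ge q 2 with h | h
    · interval_cases q
      · exact absurd rfl (NeZero.ne 0)
      · exact absurd (χ.level_one' rfl) hχ
    · exact h
  have hq1 : (1:ℝ) ≤ (q:ℝ) := by exact_mod_cast Nat.one_le_of_lt hq2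
  have hq0 : (0:ℝ) < (q:ℝ) := by linarith
  set σ := s.re with hσ
  rw [GS18.rep_strip χ hχ h0, norm_mul]
  have hsplit : Set.Ioi (1:ℝ) = Set.Ioc 1 (q:ℝ) ∪ Set.Ioi (q:ℝ) :=
    (Set.Ioc_union_Ioi_eq_Ioi hq1).symm
  have hI1 : IntegrableOn (fun x : ℝ => (x : ℂ) ^ (-s - 1) * GS18.gsum χ x) (Set.Ioc 1 (q:ℝ)) :=
    (GS18.integrableOn_K χ hχ h0).mono_set Set.Ioc_subset_Ioi_self
  have hI2 : IntegrableOn (fun x : ℝ => (x : ℂ) ^ (-s - 1) * GS18.gsum χ x) (Set.Ioi (q:ℝ)) :=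
    (GS18.integrableOn_K χ hχ h0).mono_set (Set.Ioi_subset_Ioi hq1)
  rw [hsplit, MeasureTheory.setIntegral_union (Set.Ioc_disjoint_Ioi le_rfl)
    measurableSet_Ioi hI1 hI2]
  have hA : ‖∫ x in Set.Ioc 1 (q:ℝ), (x : ℂ) ^ (-s - 1) * GS18.gsum χ x‖ ≤
      ((q : ℝ) ^ (1 - σ) - 1) / (1 - σ) := by
    have hbint : IntegrableOn (fun x : ℝ => x ^ (-σ)) (Set.Ioc 1 (q:ℝ)) := by
      refine ((ContinuousOn.integrableOn_compact isCompact_Icc ?_).mono_set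
        Set.Ioc_subset_Icc_self)
      exact fun x hx => (Real.continuousAt_rpow_const x _
        (Or.inl (by linarith [hx.1] : x ≠ 0))).continuousWithinAt
    have hle : ∀ᵐ x : ℝ ∂(volume.restrict (Set.Ioc 1 (q:ℝ))),
        ‖(x : ℂ) ^ (-s - 1) * GS18.gsum χ x‖ ≤ x ^ (-σ) := by
      filter_upwards [ae_restrict_mem measurableSet_Ioc] with x hx
      have hx0 : (0:ℝ) < x := lt_trans one_pos hx.1
      rw [norm_mul, GS18.norm_cpow_eq _ hx0, show (-s - 1).re = -σ - 1 by simp [hσ]]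
      calc x ^ (-σ - 1) * ‖GS18.gsum χ x‖ ≤ x ^ (-σ - 1) * x :=
          mul_le_mul_of_nonneg_left (GS18.gsum_le_self χ hχ hx0.le) (Real.rpow_nonneg hx0.le _)
        _ = x ^ (-σ) := by
          nth_rewrite 2 [← Real.rpow_one x]
          rw [← Real.rpow_add hx0]; ring_nf
    calc ‖∫ x in Set.Ioc 1 (q:ℝ), (x : ℂ) ^ (-s - 1) * GS18.gsum χ x‖ ≤
        ∫ x in Set.Ioc 1 (q:ℝ), x ^ (-σ) :=
        MeasureTheory.norm_integral_le_of_norm_le hbint hle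
      _ = ((q : ℝ) ^ (1 - σ) - 1) / (1 - σ) := by
        rw [← intervalIntegral.integral_of_le hq1, integral_rpow
          (Or.inl (by linarith : (-1:ℝ) < -σ))]
        rw [Real.one_rpow, show -σ + 1 = 1 - σ by ring]
  have hB : ‖∫ x in Set.Ioi (q:ℝ), (x : ℂ) ^ (-s - 1) * GS18.gsum χ x‖ ≤
      (q : ℝ) ^ (1 - σ) / σ := by
    have hbint : IntegrableOn (fun x : ℝ => (q:ℝ) * x ^ (-σ - 1)) (Set.Ioi (q:ℝ)) :=
      (integrableOn_Ioi_rpow_of_lt (by linarith) hq0).const_mul _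
    have hle : ∀ᵐ x : ℝ ∂(volume.restrict (Set.Ioi (q:ℝ))),
        ‖(x : ℂ) ^ (-s - 1) * GS18.gsum χ x‖ ≤ (q:ℝ) * x ^ (-σ - 1) := by
      filter_upwards [ae_restrict_mem measurableSet_Ioi] with x hx
      have hx0 : (0:ℝ) < x := lt_of_le_of_lt hq0.le hx
      rw [norm_mul, GS18.norm_cpow_eq _ hx0, show (-s - 1).re = -σ - 1 by simp [hσ], mul_comm ((q:ℝ)) _]
      exact mul_le_mul_of_nonneg_left (GS18.gsum_le_q χ hχ x) (Real.rpow_nonneg hx0.le _)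
    calc ‖∫ x in Set.Ioi (q:ℝ), (x : ℂ) ^ (-s - 1) * GS18.gsum χ x‖ ≤
        ∫ x in Set.Ioi (q:ℝ), (q:ℝ) * x ^ (-σ - 1) :=
        MeasureTheory.norm_integral_le_of_norm_le hbint hle
      _ = (q : ℝ) ^ (1 - σ) / σ := by
        rw [MeasureTheory.integral_const_mul, integral_Ioi_rpow_of_lt (by linarith) hq0]
        rw [show -σ - 1 + 1 = -σ by ring, neg_div_neg_eq]
        rw [eq_div_iff (by linarith : σ ≠ 0), mul_assoc, div_mul_cancel₀ _
          (by linarith : σ ≠ 0)]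
        nth_rewrite 1 [← Real.rpow_one (q:ℝ)]
        rw [← Real.rpow_add hq0, show (1:ℝ) + -σ = 1 - σ by ring]
  calc ‖s‖ * ‖(∫ x in Set.Ioc 1 (q:ℝ), (x : ℂ) ^ (-s - 1) * GS18.gsum χ x) +
        ∫ x in Set.Ioi (q:ℝ), (x : ℂ) ^ (-s - 1) * GS18.gsum χ x‖ ≤
      ‖s‖ * (‖∫ x in Set.Ioc 1 (q:ℝ), (x : ℂ) ^ (-s - 1) * GS18.gsum χ x‖ +
        ‖∫ x in Set.Ioi (q:ℝ), (x : ℂ) ^ (-s - 1) * GS18.gsum χ x‖) :=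
      mul_le_mul_of_nonneg_left (norm_add_le _ _) (norm_nonneg s)
    _ ≤ ‖s‖ * (((q : ℝ) ^ (1 - σ) - 1) / (1 - σ) + (q : ℝ) ^ (1 - σ) / σ) :=
      mul_le_mul_of_nonneg_left (add_le_add hA hB) (norm_nonneg s)

end GS18Section

open GS18Section

/-- The elementary bound for `|L(s,χ)|` in the critical strip used in the proof
of Proposition 2.4 of Granville–Soundararajan, "Large character sums: Burgess's
theorem and zeros of L-functions". -/
theorem statement_18 (q : ℕ) [NeZero q] (χ : DirichletCharacter ℂ q) (hχ : χ ≠ 1)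
    (s : ℂ) (h0 : 0 < s.re) (h1 : s.re < 1) :
    ‖χ.LFunction s‖ ≤ ‖s‖ *
      (((q : ℝ) ^ (1 - s.re) - 1) / (1 - s.re) + (q : ℝ) ^ (1 - s.re) / s.re) :=
  GS18.final χ hχ s h0 h1
end
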